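/- Let F be a linearly ordered field, A and B magnitudes of F, and a, b ∈ F such that the cosets α = a + A and β = b + B are zeroless (0 ∉ α and 0 ∉ β). Then (a·b)⁻¹ • (a • B + b • A + A * B) = a⁻¹ • A + b⁻¹ • B, and this set equals a⁻¹ • A or equals b⁻¹ • B; consequently the unity of the product coset αβ equals the unity of α or the unity of β. -/

import Mathlib

open Pointwise

/-- A *magnitude* of a linearly ordered field `F` is an order-convex additive subgroup of `F`,
given as a set: it contains `0`, is closed under addition and negation, and is order-convex. -/
def IsMagnitude {F : Type*} [Field F] [LinearOrder F] [IsStrictOrderedRing F] (A : Set F) : Prop :=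
  (0 : F) ∈ A ∧ (∀ x ∈ A, ∀ y ∈ A, x + y ∈ A) ∧ (∀ x ∈ A, -x ∈ A) ∧
    (∀ x ∈ A, ∀ y ∈ A, ∀ z : F, x ≤ z → z ≤ y → z ∈ A)

/-- Order relation on subsets of `F`: `S ≤ T` iff every element of `S` is below some element of `T`. -/
def SetLE {F : Type*} [Field F] [LinearOrder F] [IsStrictOrderedRing F] (S T : Set F) : Prop :=
  ∀ x ∈ S, ∃ y ∈ T, x ≤ y

lemma mag_abs {F : Type*} [Field F] [LinearOrder F] [IsStrictOrderedRing F] {A : Set F}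
    (hA : IsMagnitude A) {y : F} (hy : y ∈ A) {z : F} (h : |z| ≤ |y|) : z ∈ A := by
  obtain ⟨h0, hadd, hneg, hconv⟩ := hA
  have habs : |y| ∈ A := by
    rcases abs_choice y with hc | hc
    · rwa [hc]
    · rw [hc]; exact hneg y hy
  obtain ⟨h1, h2⟩ := abs_le.mp h
  exact hconv _ (hneg _ habs) _ habs z h1 h2

lemma mag_smul {F : Type*} [Field F] [LinearOrder F] [IsStrictOrderedRing F] {A : Set F}
    (hA : IsMagnitude A) {c : F} (hc : c ≠ 0) : IsMagnitude (c • A) := by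
  have hcc : c * c⁻¹ = 1 := mul_inv_cancel₀ hc
  refine ⟨⟨0, hA.1, by simp⟩, ?_, ?_, ?_⟩
  · rintro x ⟨u, hu, rfl⟩ y ⟨v, hv, rfl⟩
    exact ⟨u + v, hA.2.1 u hu v hv, by simp [smul_eq_mul, mul_add]⟩
  · rintro x ⟨u, hu, rfl⟩
    exact ⟨-u, hA.2.2.1 u hu, by simp [smul_eq_mul]⟩
  · rintro x ⟨u, hu, rfl⟩ y ⟨v, hv, rfl⟩ z h1 h2
    refine ⟨c⁻¹ * z, ?_, by simp [smul_eq_mul]; field_simp⟩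
    simp only [smul_eq_mul] at h1 h2
    have e : c⁻¹ * c = 1 := inv_mul_cancel₀ hc
    rcases hc.lt_or_gt with hneg | hpos
    · have t1 := mul_le_mul_of_nonpos_left h1 (le_of_lt (inv_neg''.mpr hneg))
      have t2 := mul_le_mul_of_nonpos_left h2 (le_of_lt (inv_neg''.mpr hneg))
      rw [← mul_assoc, e, one_mul] at t1 t2
      exact hA.2.2.2 v hv u hu _ t2 t1
    · have t1 := mul_le_mul_of_nonneg_left h1 (le_of_lt (inv_pos.mpr hpos))
      have t2 := mul_le_mul_of_nonneg_left h2 (le_of_lt (inv_pos.mpr hpos))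
      rw [← mul_assoc, e, one_mul] at t1 t2
      exact hA.2.2.2 u hu v hv _ t1 t2

lemma mag_add_comp {F : Type*} [Field F] [LinearOrder F] [IsStrictOrderedRing F] {C D : Set F}
    (hC : IsMagnitude C) (hD : IsMagnitude D) : C + D = C ∨ C + D = D := by
  by_cases h : C ⊆ D
  · right; ext x
    simp only [Set.mem_add]
    constructor
    · rintro ⟨u, hu, v, hv, rfl⟩
      exact hD.2.1 u (h hu) v hv
    · intro hx; exact ⟨0, hC.1, x, hx, by simp⟩
  · left
    rw [Set.not_subset] at h
    obtain ⟨z, hz, hzD⟩ := h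
    have hDC : ∀ y ∈ D, y ∈ C := by
      intro y hy
      refine mag_abs hC hz ?_
      by_contra hlt
      push_neg at hlt
      exact hzD (mag_abs hD hy hlt.le)
    ext x
    simp only [Set.mem_add]
    constructor
    · rintro ⟨u, hu, v, hv, rfl⟩
      exact hC.2.1 u hu v (hDC v hv)
    · intro hx; exact ⟨x, hx, 0, hD.1, by simp⟩

theorem unity_of_product {F : Type*} [Field F] [LinearOrder F] [IsStrictOrderedRing F]
    (A B : Set F) (hA : IsMagnitude A) (hB : IsMagnitude B) (a b : F)
    (hzlA : (0 : F) ∉ ({a} + A)) (hzlB : (0 : F) ∉ ({b} + B)) :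
    (a * b)⁻¹ • (a • B + b • A + A * B) = a⁻¹ • A + b⁻¹ • B ∧
      ((a * b)⁻¹ • (a • B + b • A + A * B) = a⁻¹ • A ∨
        (a * b)⁻¹ • (a • B + b • A + A * B) = b⁻¹ • B) ∧
      (({1} + (a * b)⁻¹ • (a • B + b • A + A * B)) = {1} + a⁻¹ • A ∨
        ({1} + (a * b)⁻¹ • (a • B + b • A + A * B)) = {1} + b⁻¹ • B) := by
  have haA : -a ∉ A := fun h => hzlA (Set.mem_add.mpr ⟨a, rfl, -a, h, add_neg_cancel a⟩)
  have hbB : -b ∉ B := fun h => hzlB (Set.mem_add.mpr ⟨b, rfl, -b, h, add_neg_cancel b⟩)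
  have ha : a ≠ 0 := by rintro rfl; exact haA (by simpa using hA.1)
  have hb : b ≠ 0 := by rintro rfl; exact hbB (by simpa using hB.1)
  have hAlt : ∀ p ∈ A, |p| < |a| := by
    intro p hp
    by_contra hle; push_neg at hle
    exact haA (mag_abs hA hp (by simpa using hle))
  have key : (a * b)⁻¹ • (a • B + b • A + A * B) = a⁻¹ • A + b⁻¹ • B := by
    ext x
    simp only [Set.mem_smul_set, Set.mem_add, Set.mem_mul, smul_eq_mul]
    constructor
    · rintro ⟨y, ⟨s, ⟨m, ⟨v, hv, rfl⟩, n, ⟨u, hu, rfl⟩, rfl⟩, t, ⟨p, hp, q, hq, rfl⟩, rfl⟩, rfl⟩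
      have ha0 : 0 < |a| := abs_pos.mpr ha
      have hbound : |a⁻¹ * (p * q)| ≤ |q| := by
        rw [abs_mul, abs_inv, abs_mul, inv_mul_le_iff₀ ha0]
        exact mul_le_mul_of_nonneg_right (hAlt p hp).le (abs_nonneg q)
      refine ⟨a⁻¹ * u, ⟨u, hu, rfl⟩, b⁻¹ * (v + a⁻¹ * (p * q)),
        ⟨v + a⁻¹ * (p * q), hB.2.1 v hv _ (mag_abs hB hq hbound), rfl⟩, ?_⟩
      field_simp
      ring
    · rintro ⟨m, ⟨u, hu, rfl⟩, n, ⟨v, hv, rfl⟩, rfl⟩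
      refine ⟨a * v + b * u + 0 * 0,
        ⟨a * v + b * u, ⟨a * v, ⟨v, hv, rfl⟩, b * u, ⟨u, hu, rfl⟩, rfl⟩,
          0 * 0, ⟨0, hA.1, 0, hB.1, rfl⟩, rfl⟩, ?_⟩
      field_simp
      ring
  have comp := mag_add_comp (mag_smul hA (inv_ne_zero ha)) (mag_smul hB (inv_ne_zero hb))
  refine ⟨key, ?_, ?_⟩
  · rw [key]; exact comp
  · rw [key]; exact comp.imp (fun h => by rw [h]) (fun h => by rw [h])
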